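/- Let G be a graph and u, v non-adjacent vertices, and let Z_{u,v}(G) be the graph obtained by replacing u with a twin of v. Then the clique number of Z_{u,v}(G) equals the clique number of G with the vertex u deleted. -/

import Mathlib

/-- Zykov symmetrization: replace `u` with a twin of `v` (delete all edges at `u`,
join `u` to exactly the neighbours of `v`). -/
def zykov {V : Type*} (G : SimpleGraph V) (u v : V) : SimpleGraph V where
  Adj x y := x ≠ y ∧
    ((x ≠ u ∧ y ≠ u ∧ G.Adj x y) ∨ (x = u ∧ G.Adj v y) ∨ (y = u ∧ G.Adj v x))
  symm := ⟨by
    rintro x y ⟨hxy, h⟩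
    refine ⟨hxy.symm, ?_⟩
    rcases h with ⟨hx, hy, h⟩ | ⟨hx, h⟩ | ⟨hy, h⟩
    · exact Or.inl ⟨hy, hx, h.symm⟩
    · exact Or.inr (Or.inr ⟨hx, h⟩)
    · exact Or.inr (Or.inl ⟨hy, h⟩)⟩
  loopless := ⟨fun x h => h.1 rfl⟩

/-- A `G`-clique avoiding `u` gives a clique of the same size in `G.induce {u}ᶜ`. -/
lemma aux_card_le {V : Type*} [Fintype V] (G : SimpleGraph V) (u : V) (s : Finset V)
    (hu : u ∉ s) (hs : G.IsClique s) :
    s.card ≤ (G.induce ({u}ᶜ : Set V)).cliqueNum := by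
  classical
  have hne : ∀ x ∈ s, x ∈ ({u}ᶜ : Set V) := by
    intro x hx
    simp only [Set.mem_compl_iff, Set.mem_singleton_iff]
    rintro rfl; exact hu hx
  let f : {x // x ∈ s} ↪ ↥({u}ᶜ : Set V) :=
    ⟨fun x => ⟨x.1, hne x.1 x.2⟩, fun a b h => by cases a; cases b; simpa using h⟩
  let t : Finset ↥({u}ᶜ : Set V) := s.attach.map f
  have hcard : t.card = s.card := by simp [t]
  have ht : (G.induce ({u}ᶜ : Set V)).IsClique t := by
    rintro ⟨x, hx⟩ hxt ⟨y, hy⟩ hyt hxy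
    rw [Finset.mem_coe, Finset.mem_map] at hxt hyt
    simp only [f, Finset.mem_attach, Function.Embedding.coeFn_mk, true_and,
      Subtype.mk.injEq] at hxt hyt
    obtain ⟨⟨x', hx's⟩, hx'e⟩ := hxt
    obtain rfl : x' = x := congrArg Subtype.val hx'e
    obtain ⟨⟨y', hy's⟩, hy'e⟩ := hyt
    obtain rfl : y' = y := congrArg Subtype.val hy'e
    have : x' ≠ y' := fun h => hxy (by simp [h])
    exact hs hx's hy's this
  calc s.card = t.card := hcard.symm
    _ ≤ _ := ht.card_le_cliqueNum

theorem zykov_cliqueNum_eq_delete {V : Type*} [Fintype V] (G : SimpleGraph V) (u v : V)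
    (huv : u ≠ v) (hna : ¬ G.Adj u v) :
    (zykov G u v).cliqueNum = (G.induce ({u}ᶜ : Set V)).cliqueNum := by
  classical
  apply le_antisymm
  · obtain ⟨s, hs, hcard⟩ := (zykov G u v).exists_isNClique_cliqueNum
    rw [← hcard]
    by_cases hu : u ∈ s
    · -- replace u by v
      have hvns : v ∉ s := by
        intro hv
        have := hs hu hv huv
        rcases this.2 with ⟨h, _⟩ | ⟨_, h⟩ | ⟨h, _⟩
        · exact h rfl
        · exact G.loopless.irrefl v h
        · exact huv h.symm
      set s' : Finset V := insert v (s.erase u) with hs'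
      have hvne : v ∉ s.erase u := fun h => hvns (Finset.mem_of_mem_erase h)
      have hcard' : s'.card = s.card := by
        rw [hs', Finset.card_insert_of_notMem hvne, Finset.card_erase_of_mem hu]
        have : 1 ≤ s.card := Finset.card_pos.mpr ⟨u, hu⟩
        omega
      have hus' : u ∉ s' := by
        simp only [hs', Finset.mem_insert]
        rintro (rfl | h)
        · exact huv rfl
        · exact (Finset.notMem_erase u s) h
      have hclique : G.IsClique s' := by
        rintro x hx y hy hxy
        simp only [hs', Finset.coe_insert, Set.mem_insert_iff, Finset.coe_erase,
          Set.mem_diff, Set.mem_singleton_iff, Finset.mem_coe] at hx hy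
        rcases hx with rfl | ⟨hxs, hxu⟩
        · rcases hy with rfl | ⟨hys, hyu⟩
          · exact absurd rfl hxy
          · -- G.Adj v y from zykov adj u y
            have := hs hu hys (Ne.symm hyu)
            rcases this.2 with ⟨h, _⟩ | ⟨_, h⟩ | ⟨h, _⟩
            · exact absurd rfl h
            · exact h
            · exact absurd h hyu
        · rcases hy with rfl | ⟨hys, hyu⟩
          · have := hs hu hxs (Ne.symm hxu)
            rcases this.2 with ⟨h, _⟩ | ⟨_, h⟩ | ⟨h, _⟩
            · exact absurd rfl h
            · exact h.symm
            · exact absurd h hxu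
          · have := hs hxs hys hxy
            rcases this.2 with ⟨_, _, h⟩ | ⟨h, _⟩ | ⟨h, _⟩
            · exact h
            · exact absurd h hxu
            · exact absurd h hyu
      calc s.card = s'.card := hcard'.symm
        _ ≤ _ := aux_card_le G u s' hus' hclique
    · have hclique : G.IsClique s := by
        rintro x hx y hy hxy
        have := hs hx hy hxy
        rcases this.2 with ⟨_, _, h⟩ | ⟨h, _⟩ | ⟨h, _⟩
        · exact h
        · exact absurd (h ▸ hx) hu
        · exact absurd (h ▸ hy) hu
      exact aux_card_le G u s hu hclique
  · obtain ⟨t, ht, hcard⟩ := (G.induce ({u}ᶜ : Set V)).exists_isNClique_cliqueNum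
    rw [← hcard]
    let s : Finset V := t.map ⟨Subtype.val, Subtype.val_injective⟩
    have hcard' : s.card = t.card := Finset.card_map _
    have hclique : (zykov G u v).IsClique s := by
      rintro x hx y hy hxy
      simp only [s, Finset.coe_map, Set.mem_image, Finset.mem_coe,
        Function.Embedding.coeFn_mk] at hx hy
      obtain ⟨⟨x', hx'⟩, hx't, rfl⟩ := hx
      obtain ⟨⟨y', hy'⟩, hy't, rfl⟩ := hy
      have hxu : x' ≠ u := by simpa [Set.mem_compl_iff] using hx'
      have hyu : y' ≠ u := by simpa [Set.mem_compl_iff] using hy'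
      have hne : (⟨x', hx'⟩ : ↥({u}ᶜ : Set V)) ≠ ⟨y', hy'⟩ := fun h => hxy (congrArg Subtype.val h)
      have hadj := ht hx't hy't hne
      exact ⟨hxy, Or.inl ⟨hxu, hyu, hadj⟩⟩
    calc t.card = s.card := hcard'.symm
      _ ≤ _ := hclique.card_le_cliqueNum
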